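/- arXiv:2503.12375 — 2 statements merged into one kernel-verified Lean document; each statement's English description precedes it below -/
import Mathlib

section
/- Let $C_1, C_2 \ge 0$ with $C_1 + C_2 \le 1$, and let $\theta_1, \theta_2 \in \mathbb{R}$. Define the complex number $G_k = C_1(1 - e^{i\theta_1}) + C_2(1 - e^{i\theta_2}) - 1$. Then $|G_k| \le 1$. -/
open Complex

theorem stmt0 (C1 C2 θ1 θ2 : ℝ) (h1 : 0 ≤ C1) (h2 : 0 ≤ C2) (hsum : C1 + C2 ≤ 1) :
    ‖(C1 : ℂ) * (1 - Complex.exp (θ1 * I)) +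
      (C2 : ℂ) * (1 - Complex.exp (θ2 * I)) - 1‖ ≤ 1 := by
  have key : (C1 : ℂ) * (1 - Complex.exp (θ1 * I)) +
      (C2 : ℂ) * (1 - Complex.exp (θ2 * I)) - 1
      = -((C1 : ℂ) * Complex.exp (θ1 * I) + (C2 : ℂ) * Complex.exp (θ2 * I)
        + ((1 - C1 - C2 : ℝ) : ℂ)) := by
    push_cast; ring
  rw [key, norm_neg]
  have e1 : ‖Complex.exp (θ1 * I)‖ = 1 := by
    simpa using Complex.norm_exp_ofReal_mul_I θ1
  have e2 : ‖Complex.exp (θ2 * I)‖ = 1 := by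
    simpa using Complex.norm_exp_ofReal_mul_I θ2
  calc ‖(C1 : ℂ) * Complex.exp (θ1 * I) + (C2 : ℂ) * Complex.exp (θ2 * I)
        + ((1 - C1 - C2 : ℝ) : ℂ)‖
      ≤ ‖(C1 : ℂ) * Complex.exp (θ1 * I) + (C2 : ℂ) * Complex.exp (θ2 * I)‖
        + ‖((1 - C1 - C2 : ℝ) : ℂ)‖ := norm_add_le _ _
    _ ≤ ‖(C1 : ℂ) * Complex.exp (θ1 * I)‖
        + ‖(C2 : ℂ) * Complex.exp (θ2 * I)‖
        + ‖((1 - C1 - C2 : ℝ) : ℂ)‖ := by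
          gcongr; exact norm_add_le _ _
    _ = C1 + C2 + |1 - C1 - C2| := by
          rw [norm_mul, norm_mul, e1, e2, Complex.norm_real,
            Complex.norm_real, Complex.norm_real, Real.norm_eq_abs, Real.norm_eq_abs, Real.norm_eq_abs, _root_.abs_of_nonneg h1,
            _root_.abs_of_nonneg h2]
          ring
    _ ≤ 1 := by rw [_root_.abs_of_nonneg (by linarith)]; linarith
end

section
/- Let $C_1, C_2 \ge 0$ with $C_1 + C_2 \le 1$, let $\theta_1, \theta_2 \in \mathbb{R}$, let $C_{\mu 1}, C_{\mu 2} \ge 0$, and set $G_k = C_1(1-e^{i\theta_1}) + C_2(1-e^{i\theta_2}) - 1$. Then the unique root $g_1$ of the linear polynomial $\phi_1(g) = g(1 - C_{\mu 1}(\cos\theta_1 - 1) - C_{\mu 2}(\cos\theta_2 - 1)) + G_k$ satisfies $|g_1| \le 1$. -/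
open Complex

theorem stmt2 (C1 C2 θ1 θ2 Cμ1 Cμ2 : ℝ) (h1 : 0 ≤ C1) (h2 : 0 ≤ C2)
    (hsum : C1 + C2 ≤ 1) (hμ1 : 0 ≤ Cμ1) (hμ2 : 0 ≤ Cμ2)
    (Gk : ℂ)
    (hGk : Gk = (C1 : ℂ) * (1 - Complex.exp (θ1 * I)) +
      (C2 : ℂ) * (1 - Complex.exp (θ2 * I)) - 1)
    (g1 : ℂ)
    (hroot : g1 * ((1 : ℂ) - (Cμ1 : ℂ) * ((Real.cos θ1 : ℂ) - 1)
        - (Cμ2 : ℂ) * ((Real.cos θ2 : ℂ) - 1)) + Gk = 0) :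
    ‖g1‖ ≤ 1 := by
  set d : ℝ := 1 - Cμ1 * (Real.cos θ1 - 1) - Cμ2 * (Real.cos θ2 - 1) with hd
  have hd1 : (1 : ℝ) ≤ d := by
    have hc1 : Real.cos θ1 ≤ 1 := Real.cos_le_one θ1
    have hc2 : Real.cos θ2 ≤ 1 := Real.cos_le_one θ2
    nlinarith [mul_nonneg hμ1 (sub_nonneg.mpr hc1), mul_nonneg hμ2 (sub_nonneg.mpr hc2)]
  have hcoeff : ((1 : ℂ) - (Cμ1 : ℂ) * ((Real.cos θ1 : ℂ) - 1)
      - (Cμ2 : ℂ) * ((Real.cos θ2 : ℂ) - 1)) = (d : ℂ) := by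
    push_cast [hd]; ring
  have hGkabs : ‖Gk‖ ≤ 1 := by
    have h1e : ‖Complex.exp (θ1 * I)‖ = 1 := by
      simpa using Complex.norm_exp_ofReal_mul_I θ1
    have h2e : ‖Complex.exp (θ2 * I)‖ = 1 := by
      simpa using Complex.norm_exp_ofReal_mul_I θ2
    have hrew : Gk = -(((1 - C1 - C2 : ℝ) : ℂ) + (C1 : ℂ) * Complex.exp (θ1 * I)
        + (C2 : ℂ) * Complex.exp (θ2 * I)) := by
      rw [hGk]; push_cast; ring
    rw [hrew, norm_neg]
    calc ‖_‖ ≤ ‖(((1 - C1 - C2 : ℝ) : ℂ))‖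
          + ‖((C1 : ℂ) * Complex.exp (θ1 * I))‖
          + ‖((C2 : ℂ) * Complex.exp (θ2 * I))‖ := by
            exact (norm_add_le _ _).trans
              (add_le_add_left (norm_add_le _ _) _)
      _ ≤ 1 := by
          rw [norm_mul, norm_mul, h1e, h2e, Complex.norm_real, Real.norm_eq_abs]
          rw [_root_.abs_of_nonneg (by linarith : (0:ℝ) ≤ 1 - C1 - C2),
            Complex.norm_real, Real.norm_eq_abs, Complex.norm_real, Real.norm_eq_abs,
            _root_.abs_of_nonneg h1, _root_.abs_of_nonneg h2]
          linarith
  have heq : g1 * (d : ℂ) = -Gk := by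
    rw [← hcoeff]; linear_combination hroot
  have := congrArg (‖·‖) heq
  rw [norm_mul, norm_neg, Complex.norm_real, Real.norm_eq_abs, _root_.abs_of_nonneg (by linarith)] at this
  nlinarith [norm_nonneg g1]
end
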